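/- Let L ≥ 1, let U ⊆ Δ^L be a nonempty compact convex set, and let ρ(Z) = max_{q ∈ U} Σ_{j=1}^L q(j) Z(j). Let A_1,…,A_L ∈ ℝ^{n×n}, B_1,…,B_L ∈ ℝ^{n×m}, let Q, R, P be symmetric positive definite, and define V_0(x) := xᵀPx, V_{h+1}(x) := inf_{u ∈ ℝ^m} [xᵀQx + uᵀRu + ρ(j ↦ V_h(A_j x + B_j u))]. Fix N ≥ 1 and let M_A := max over r ∈ {0,…,N} and over all index sequences j_0,…,j_{r−1} ∈ {1,…,L} of ‖A_{j_{r−1}} ⋯ A_{j_1} A_{j_0}‖₂² (with the empty product equal to the identity). Then for every x ∈ ℝ^n: 0 ≤ V_N(x) ≤ (N‖Q‖₂ + ‖P‖₂) · M_A · ‖x‖². -/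

import Mathlib

open Matrix

noncomputable def gA13 {L n : ℕ} (A : Fin L → Matrix (Fin n) (Fin n) ℝ)
    (k : ℕ) (x : Fin n → ℝ) : ℝ :=
  ⨆ js : Fin k → Fin L,
    ‖(WithLp.equiv 2 (Fin n → ℝ)).symm ((List.ofFn fun i => A (js i)).prod *ᵥ x)‖ ^ 2

/-- Upper Lyapunov bound (equation (15) of the paper): the `N`-step risk-averse value
function satisfies `0 ≤ V_N(x) ≤ (N‖Q‖₂ + ‖P‖₂) M_A ‖x‖²`, where `‖·‖₂` is the spectral
norm and `M_A` is the largest squared spectral norm of products of at most `N` of the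
matrices `A_j`. -/
theorem stmt_13 (L n m : ℕ) (hL : 1 ≤ L)
    (U : Set (Fin L → ℝ))
    (hU : U.Nonempty) (hUc : IsCompact U) (hUconv : Convex ℝ U)
    (hUsub : U ⊆ stdSimplex ℝ (Fin L))
    (ρ : (Fin L → ℝ) → ℝ)
    (hρ : ∀ Z : Fin L → ℝ, IsGreatest ((fun q => ∑ j, q j * Z j) '' U) (ρ Z))
    (A : Fin L → Matrix (Fin n) (Fin n) ℝ) (B : Fin L → Matrix (Fin n) (Fin m) ℝ)
    (Q P : Matrix (Fin n) (Fin n) ℝ) (R : Matrix (Fin m) (Fin m) ℝ)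
    (hQ : Q.PosDef) (hP : P.PosDef) (hR : R.PosDef)
    (V : ℕ → (Fin n → ℝ) → ℝ)
    (hV0 : ∀ x, V 0 x = x ⬝ᵥ (P *ᵥ x))
    (hVs : ∀ (h : ℕ) (x : Fin n → ℝ), V (h + 1) x =
      ⨅ u : Fin m → ℝ, (x ⬝ᵥ (Q *ᵥ x) + u ⬝ᵥ (R *ᵥ u)
        + ρ (fun j => V h (A j *ᵥ x + B j *ᵥ u))))
    (N : ℕ) (hN : 1 ≤ N) (MA : ℝ)
    (hMA : IsGreatest
      { t : ℝ | ∃ r : ℕ, r ≤ N ∧ ∃ js : Fin r → Fin L,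
          t = ‖Matrix.toEuclideanCLM (𝕜 := ℝ) ((List.ofFn fun i => A (js i)).prod)‖ ^ 2 }
      MA) :
    ∀ x : Fin n → ℝ, 0 ≤ V N x ∧
      V N x ≤ ((N : ℝ) * ‖Matrix.toEuclideanCLM (𝕜 := ℝ) Q‖
        + ‖Matrix.toEuclideanCLM (𝕜 := ℝ) P‖) * MA * (∑ i, x i ^ 2) := by
  haveI : NeZero L := ⟨by omega⟩
  set e : (Fin n → ℝ) → EuclideanSpace ℝ (Fin n) := fun x => (WithLp.equiv 2 (Fin n → ℝ)).symm x
    with he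
  -- basic facts about ρ
  have hρ_nonneg : ∀ Z : Fin L → ℝ, (∀ j, 0 ≤ Z j) → 0 ≤ ρ Z := by
    intro Z hZ
    obtain ⟨q, hqU, hq⟩ := (hρ Z).1
    rw [← hq]
    exact Finset.sum_nonneg fun j _ => mul_nonneg ((hUsub hqU).1 j) (hZ j)
  have hρ_le : ∀ (Z : Fin L → ℝ) (C : ℝ), (∀ j, Z j ≤ C) → ρ Z ≤ C := by
    intro Z C hZ
    obtain ⟨q, hqU, hq⟩ := (hρ Z).1
    have hq1 : ∑ j, q j = 1 := (hUsub hqU).2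
    calc ρ Z = ∑ j, q j * Z j := hq.symm
      _ ≤ ∑ j, q j * C :=
        Finset.sum_le_sum fun j _ => mul_le_mul_of_nonneg_left (hZ j) ((hUsub hqU).1 j)
      _ = C := by rw [← Finset.sum_mul, hq1, one_mul]
  -- quadratic form bounds
  have hquad : ∀ (M : Matrix (Fin n) (Fin n) ℝ) (x : Fin n → ℝ),
      x ⬝ᵥ (M *ᵥ x) ≤ ‖Matrix.toEuclideanCLM (𝕜 := ℝ) M‖ * ‖e x‖ ^ 2 := by
    intro M x
    have h1 : x ⬝ᵥ (M *ᵥ x) = @inner ℝ _ _ (e x) (Matrix.toEuclideanCLM (𝕜 := ℝ) M (e x)) := by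
      rw [he]
      simp only [WithLp.equiv_symm_apply, Matrix.toEuclideanCLM_toLp]
      simp [PiLp.inner_apply, RCLike.inner_apply, dotProduct, mul_comm]
    rw [h1]
    calc @inner ℝ _ _ (e x) (Matrix.toEuclideanCLM (𝕜 := ℝ) M (e x))
        ≤ ‖e x‖ * ‖Matrix.toEuclideanCLM (𝕜 := ℝ) M (e x)‖ := real_inner_le_norm _ _
      _ ≤ ‖e x‖ * (‖Matrix.toEuclideanCLM (𝕜 := ℝ) M‖ * ‖e x‖) :=
        mul_le_mul_of_nonneg_left (ContinuousLinearMap.le_opNorm _ _) (norm_nonneg _)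
      _ = ‖Matrix.toEuclideanCLM (𝕜 := ℝ) M‖ * ‖e x‖ ^ 2 := by ring
  have hquad_nonneg : ∀ {k : ℕ} (M : Matrix (Fin k) (Fin k) ℝ), M.PosDef → ∀ (x : Fin k → ℝ),
      0 ≤ x ⬝ᵥ (M *ᵥ x) := by
    intro k M hM x
    simpa using hM.posSemidef.re_dotProduct_nonneg x
  -- facts about gA13
  have hg_nonneg : ∀ (k : ℕ) (x : Fin n → ℝ), 0 ≤ gA13 A k x := by
    intro k x
    have hne : Nonempty (Fin k → Fin L) := ⟨fun _ => ⟨0, by omega⟩⟩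
    obtain ⟨js⟩ := hne
    rw [gA13]
    exact le_trans (sq_nonneg _)
      (le_ciSup (f := fun js : Fin k → Fin L =>
        ‖(WithLp.equiv 2 (Fin n → ℝ)).symm ((List.ofFn fun i => A (js i)).prod *ᵥ x)‖ ^ 2)
        (Set.Finite.bddAbove (Set.finite_range _)) js)
  have hg0 : ∀ x : Fin n → ℝ, gA13 A 0 x = ‖e x‖ ^ 2 := by
    intro x
    rw [gA13, ciSup_unique]
    simp
    rfl
  have hg_step : ∀ (k : ℕ) (j : Fin L) (x : Fin n → ℝ),
      gA13 A k (A j *ᵥ x) ≤ gA13 A (k + 1) x := by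
    intro k j x
    have hne : Nonempty (Fin k → Fin L) := ⟨fun _ => ⟨0, by omega⟩⟩
    rw [gA13, gA13]
    apply ciSup_le
    intro js
    set js' : Fin (k + 1) → Fin L := Fin.snoc js j with hjs'
    have key : (List.ofFn fun i => A (js i)).prod *ᵥ (A j *ᵥ x)
        = (List.ofFn fun i => A (js' i)).prod *ᵥ x := by
      rw [Matrix.mulVec_mulVec]
      congr 1
      rw [List.ofFn_succ' (fun i => A (js' i))]
      simp [hjs', List.prod_concat, Fin.snoc_castSucc, Fin.snoc_last]
    rw [key]
    exact le_ciSup (f := fun js : Fin (k + 1) → Fin L =>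
      ‖(WithLp.equiv 2 (Fin n → ℝ)).symm ((List.ofFn fun i => A (js i)).prod *ᵥ x)‖ ^ 2)
      (Set.Finite.bddAbove (Set.finite_range _)) js'
  have hg_le : ∀ (k : ℕ), k ≤ N → ∀ x : Fin n → ℝ, gA13 A k x ≤ MA * ‖e x‖ ^ 2 := by
    intro k hk x
    have hne : Nonempty (Fin k → Fin L) := ⟨fun _ => ⟨0, by omega⟩⟩
    rw [gA13]
    apply ciSup_le
    intro js
    have h1 : ‖e ((List.ofFn fun i => A (js i)).prod *ᵥ x)‖
        ≤ ‖Matrix.toEuclideanCLM (𝕜 := ℝ) ((List.ofFn fun i => A (js i)).prod)‖ * ‖e x‖ := by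
      have h0 := (Matrix.toEuclideanCLM (𝕜 := ℝ)
        ((List.ofFn fun i => A (js i)).prod)).le_opNorm
        ((WithLp.equiv 2 (Fin n → ℝ)).symm x)
      simp only [WithLp.equiv_symm_apply, Matrix.toEuclideanCLM_toLp] at h0
      exact h0
    have h2 : ‖Matrix.toEuclideanCLM (𝕜 := ℝ) ((List.ofFn fun i => A (js i)).prod)‖ ^ 2 ≤ MA :=
      hMA.2 ⟨k, hk, js, rfl⟩
    calc ‖e ((List.ofFn fun i => A (js i)).prod *ᵥ x)‖ ^ 2
        ≤ (‖Matrix.toEuclideanCLM (𝕜 := ℝ) ((List.ofFn fun i => A (js i)).prod)‖ * ‖e x‖) ^ 2 :=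
          pow_le_pow_left₀ (norm_nonneg _) h1 2
      _ = ‖Matrix.toEuclideanCLM (𝕜 := ℝ) ((List.ofFn fun i => A (js i)).prod)‖ ^ 2 * ‖e x‖ ^ 2 := by
          ring
      _ ≤ MA * ‖e x‖ ^ 2 := mul_le_mul_of_nonneg_right h2 (sq_nonneg _)
  set nQ := ‖Matrix.toEuclideanCLM (𝕜 := ℝ) Q‖ with hnQ
  set nP := ‖Matrix.toEuclideanCLM (𝕜 := ℝ) P‖ with hnP
  have hnQ0 : 0 ≤ nQ := norm_nonneg _
  have hnP0 : 0 ≤ nP := norm_nonneg _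
  -- main induction
  have main : ∀ h : ℕ, ∀ x : Fin n → ℝ, 0 ≤ V h x ∧
      V h x ≤ nQ * (∑ k ∈ Finset.range h, gA13 A k x) + nP * gA13 A h x := by
    intro h
    induction h with
    | zero =>
      intro x
      constructor
      · rw [hV0]; exact hquad_nonneg P hP x
      · rw [hV0]
        simp only [Finset.range_zero, Finset.sum_empty, mul_zero, zero_add, hg0]
        exact hquad P x
    | succ h ih =>
      intro x
      have hterm_nonneg : ∀ u : Fin m → ℝ,
          0 ≤ x ⬝ᵥ (Q *ᵥ x) + u ⬝ᵥ (R *ᵥ u)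
            + ρ (fun j => V h (A j *ᵥ x + B j *ᵥ u)) := by
        intro u
        have h1 := hquad_nonneg Q hQ x
        have h2 := hquad_nonneg R hR u
        have h3 := hρ_nonneg (fun j => V h (A j *ᵥ x + B j *ᵥ u))
          (fun j => (ih (A j *ᵥ x + B j *ᵥ u)).1)
        linarith
      have hbdd : BddBelow (Set.range fun u : Fin m → ℝ =>
          x ⬝ᵥ (Q *ᵥ x) + u ⬝ᵥ (R *ᵥ u) + ρ (fun j => V h (A j *ᵥ x + B j *ᵥ u))) :=
        ⟨0, by rintro t ⟨u, rfl⟩; exact hterm_nonneg u⟩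
      constructor
      · rw [hVs]
        exact le_ciInf hterm_nonneg
      · rw [hVs]
        have h0 : (⨅ u : Fin m → ℝ, (x ⬝ᵥ (Q *ᵥ x) + u ⬝ᵥ (R *ᵥ u)
            + ρ (fun j => V h (A j *ᵥ x + B j *ᵥ u))))
            ≤ x ⬝ᵥ (Q *ᵥ x) + ρ (fun j => V h (A j *ᵥ x)) := by
          have := ciInf_le hbdd (0 : Fin m → ℝ)
          simpa using this
        refine h0.trans ?_
        have hQx : x ⬝ᵥ (Q *ᵥ x) ≤ nQ * gA13 A 0 x := by
          rw [hg0]; exact hquad Q x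
        have hρbd : ρ (fun j => V h (A j *ᵥ x))
            ≤ nQ * (∑ k ∈ Finset.range h, gA13 A (k + 1) x) + nP * gA13 A (h + 1) x := by
          apply hρ_le
          intro j
          refine (ih (A j *ᵥ x)).2.trans ?_
          have hs : ∑ k ∈ Finset.range h, gA13 A k (A j *ᵥ x)
              ≤ ∑ k ∈ Finset.range h, gA13 A (k + 1) x :=
            Finset.sum_le_sum fun k _ => hg_step k j x
          have hlast : gA13 A h (A j *ᵥ x) ≤ gA13 A (h + 1) x := hg_step h j x
          have := mul_le_mul_of_nonneg_left hs hnQ0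
          have := mul_le_mul_of_nonneg_left hlast hnP0
          linarith
        have hsum : ∑ k ∈ Finset.range (h + 1), gA13 A k x
            = (∑ k ∈ Finset.range h, gA13 A (k + 1) x) + gA13 A 0 x :=
          Finset.sum_range_succ' _ _
        rw [hsum]
        linarith
  intro x
  refine ⟨(main N x).1, ?_⟩
  have hfinal := (main N x).2
  have hsum_le : ∑ k ∈ Finset.range N, gA13 A k x ≤ N * (MA * ‖e x‖ ^ 2) := by
    calc ∑ k ∈ Finset.range N, gA13 A k x
        ≤ ∑ _k ∈ Finset.range N, MA * ‖e x‖ ^ 2 := by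
          refine Finset.sum_le_sum fun k hk => hg_le k ?_ x
          exact le_of_lt (Finset.mem_range.mp hk)
      _ = N * (MA * ‖e x‖ ^ 2) := by rw [Finset.sum_const, Finset.card_range]; simp
  have hlast_le : gA13 A N x ≤ MA * ‖e x‖ ^ 2 := hg_le N le_rfl x
  have hnorm : ‖e x‖ ^ 2 = ∑ i, x i ^ 2 := by
    rw [EuclideanSpace.norm_eq, Real.sq_sqrt (Finset.sum_nonneg fun i _ => sq_nonneg _)]
    simp [he, Real.norm_eq_abs, sq_abs]
  calc V N x ≤ nQ * (∑ k ∈ Finset.range N, gA13 A k x) + nP * gA13 A N x := hfinal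
    _ ≤ nQ * (N * (MA * ‖e x‖ ^ 2)) + nP * (MA * ‖e x‖ ^ 2) := by
        have h1 := mul_le_mul_of_nonneg_left hsum_le hnQ0
        have h2 := mul_le_mul_of_nonneg_left hlast_le hnP0
        linarith
    _ = ((N : ℝ) * nQ + nP) * MA * (∑ i, x i ^ 2) := by rw [← hnorm]; ring
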